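/- arXiv:0910.4723 — 3 statements merged into one kernel-verified Lean document; each statement's English description precedes it below -/
import Mathlib

section
/- Define D(δ,k) = δ(1-k²)/(1+k√(1-δ))² for δ ∈ [0,1], k ∈ (-1,1), and define D⁻¹(δ,k) := D(δ, -min(k, √(1-δ))). Then for k ∈ [0,1) and δ ∈ [0,1]: D⁻¹(D(δ,k), k) = δ and D(D⁻¹(δ,k), k) = min(δ, 1-k²). -/
noncomputable def Dcomp (δ k : ℝ) : ℝ :=
  δ * (1 - k ^ 2) / (1 + k * Real.sqrt (1 - δ)) ^ 2

noncomputable def DcompInv (δ k : ℝ) : ℝ :=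
  Dcomp δ (-(min k (Real.sqrt (1 - δ))))

theorem compression_inverse (k δ : ℝ) (hk : k ∈ Set.Ico (0:ℝ) 1)
    (hδ : δ ∈ Set.Icc (0:ℝ) 1) :
    DcompInv (Dcomp δ k) k = δ ∧
    Dcomp (DcompInv δ k) k = min δ (1 - k ^ 2) := by
  obtain ⟨hk0, hk1⟩ := hk
  obtain ⟨hδ0, hδ1⟩ := hδ
  set s := Real.sqrt (1 - δ) with hsdef
  have hs2 : s ^ 2 = 1 - δ := Real.sq_sqrt (by linarith)
  have hs0 : 0 ≤ s := Real.sqrt_nonneg _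
  have hs1 : s ≤ 1 := by nlinarith
  have h1 : (0:ℝ) < 1 + k * s := by nlinarith
  have hk2 : (0:ℝ) < 1 - k ^ 2 := by nlinarith
  have hks : k * s < 1 := by nlinarith
  have hDc : Dcomp δ k = δ * (1 - k ^ 2) / (1 + k * s) ^ 2 := rfl
  have hD1 : 1 - Dcomp δ k = ((k + s) / (1 + k * s)) ^ 2 := by
    rw [hDc]; field_simp; linear_combination (k ^ 2 - 1) * hs2
  have hsqrt : Real.sqrt (1 - Dcomp δ k) = (k + s) / (1 + k * s) := by
    rw [hD1, Real.sqrt_sq (by positivity)]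
  have hmin : min k (Real.sqrt (1 - Dcomp δ k)) = k := by
    apply min_eq_left
    rw [hsqrt, le_div_iff₀ h1]; nlinarith
  constructor
  · rw [DcompInv, hmin]
    show Dcomp δ k * (1 - (-k) ^ 2) / (1 + -k * Real.sqrt (1 - Dcomp δ k)) ^ 2 = δ
    rw [hsqrt, hDc]
    have h2 : 1 + -k * ((k + s) / (1 + k * s)) = (1 - k ^ 2) / (1 + k * s) := by
      field_simp; ring
    rw [h2]
    field_simp
  · rcases le_or_gt k s with hcase | hcase
    · have hmin2 : min k s = k := min_eq_left hcase
      have hInv : DcompInv δ k = δ * (1 - k ^ 2) / (1 - k * s) ^ 2 := by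
        rw [DcompInv, ← hsdef, hmin2, Dcomp]; ring_nf; rw [← hsdef]
      have hδle : δ ≤ 1 - k ^ 2 := by nlinarith
      have h1' : (0:ℝ) < 1 - k * s := by linarith
      have hD1' : 1 - DcompInv δ k = ((s - k) / (1 - k * s)) ^ 2 := by
        rw [hInv]; field_simp; linear_combination (k ^ 2 - 1) * hs2
      have hsqrt' : Real.sqrt (1 - DcompInv δ k) = (s - k) / (1 - k * s) := by
        rw [hD1', Real.sqrt_sq (div_nonneg (by linarith) (by linarith))]
      rw [min_eq_left hδle]
      show DcompInv δ k * (1 - k ^ 2) / (1 + k * Real.sqrt (1 - DcompInv δ k)) ^ 2 = δ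
      rw [hsqrt', hInv]
      have h2 : 1 + k * ((s - k) / (1 - k * s)) = (1 - k ^ 2) / (1 - k * s) := by
        field_simp; ring
      rw [h2]
      field_simp
    · have hδpos : 0 < δ := by nlinarith
      have hmin2 : min k s = s := min_eq_right hcase.le
      have hInv : DcompInv δ k = 1 := by
        rw [DcompInv, ← hsdef, hmin2, Dcomp]
        have : 1 + -s * s = δ := by nlinarith
        rw [this]
        have : 1 - (-s) ^ 2 = δ := by nlinarith
        rw [this]
        field_simp
      have hδgt : 1 - k ^ 2 ≤ δ := by nlinarith
      rw [hInv, min_eq_right hδgt, Dcomp]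
      norm_num
end

section
/- Fix K > 1 and k = (K−1)/(K+1). For α in [1/K, 1−k²] define F(α) = sup{ D(δ,k) : δ ∈ [0,1], α·δ ≥ D(δ,k) } where D(δ,k) = δ(1−k²)/(1+k√(1−δ))². Then F(α) = −(4K/(K−1)²)(√α − √K)(√α − 1/√K). -/
set_option maxHeartbeats 1600000 in
theorem box_spectrum_bound (K : ℝ) (hK : 1 < K) (α : ℝ)
    (hα : α ∈ Set.Icc (1 / K) (1 - ((K - 1) / (K + 1)) ^ 2)) :
    sSup {x : ℝ | ∃ δ ∈ Set.Icc (0:ℝ) 1,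
        x = Dcomp δ ((K - 1) / (K + 1)) ∧ Dcomp δ ((K - 1) / (K + 1)) ≤ α * δ} =
      -(4 * K / (K - 1) ^ 2) * (Real.sqrt α - Real.sqrt K) *
        (Real.sqrt α - 1 / Real.sqrt K) := by
  obtain ⟨hα1, hα2⟩ := hα
  set k : ℝ := (K - 1) / (K + 1) with hk
  have hK0 : (0:ℝ) < K := lt_trans one_pos hK
  have hK1 : (0:ℝ) < K + 1 := by linarith
  have hk0 : 0 < k := div_pos (by linarith) hK1
  have hk1 : k < 1 := by rw [hk, div_lt_one hK1]; linarith
  have hα0 : 0 < α := lt_of_lt_of_le (by positivity) hα1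
  have hk2 : (0:ℝ) < 1 - k ^ 2 := by nlinarith
  have hαk : α ≤ 1 - k ^ 2 := hα2
  have hαK : 1 ≤ α * K := (div_le_iff₀ hK0).mp hα1
  have hkk : 1 - k ^ 2 = 4 * K / (K + 1) ^ 2 := by rw [hk]; field_simp; ring
  have h1pk : 1 + k = 2 * K / (K + 1) := by rw [hk]; field_simp; ring
  set c := Real.sqrt ((1 - k ^ 2) / α) with hc
  have hcsq : c ^ 2 = (1 - k ^ 2) / α := Real.sq_sqrt (by positivity)
  have hc0 : 0 ≤ c := Real.sqrt_nonneg _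
  have hc1 : 1 ≤ c := by
    have h1 : 1 ≤ c ^ 2 := by rw [hcsq, le_div_iff₀ hα0]; linarith
    nlinarith
  have hck2 : c ^ 2 ≤ (1 + k) ^ 2 := by
    rw [hcsq, div_le_iff₀ hα0, hkk, h1pk]
    have key : (2 * K / (K + 1)) ^ 2 * α - 4 * K / (K + 1) ^ 2
        = 4 * K * (α * K - 1) / (K + 1) ^ 2 := by
      field_simp
      ring
    have hpos : 0 ≤ 4 * K * (α * K - 1) / (K + 1) ^ 2 :=
      div_nonneg (by nlinarith) (by positivity)
    linarith
  have hck : c ≤ 1 + k := by nlinarith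
  set s : ℝ := (c - 1) / k with hs
  have hs0 : 0 ≤ s := div_nonneg (by linarith) hk0.le
  have hs1 : s ≤ 1 := by rw [hs, div_le_one hk0]; linarith
  set δs : ℝ := 1 - s ^ 2 with hδs
  have hδs0 : 0 ≤ δs := by nlinarith
  have hδs1 : δs ≤ 1 := by nlinarith
  have hks : 1 + k * s = c := by rw [hs]; field_simp; ring
  have hDδs : Dcomp δs k = α * δs := by
    have h1 : Real.sqrt (1 - δs) = s := by
      rw [hδs, show 1 - (1 - s ^ 2) = s ^ 2 by ring, Real.sqrt_sq hs0]
    simp only [Dcomp]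
    rw [h1, hks, hcsq]
    field_simp
  have hub : ∀ x ∈ {x : ℝ | ∃ δ ∈ Set.Icc (0:ℝ) 1,
      x = Dcomp δ k ∧ Dcomp δ k ≤ α * δ}, x ≤ α * δs := by
    rintro x ⟨δ, ⟨hδ0, hδ1⟩, rfl, hle⟩
    rcases eq_or_lt_of_le hδ0 with h | h
    · rw [← h]
      simp only [Dcomp, zero_mul, zero_div]
      exact mul_nonneg hα0.le hδs0
    · set t := Real.sqrt (1 - δ) with ht
      have ht0 : 0 ≤ t := Real.sqrt_nonneg _
      have htsq : t ^ 2 = 1 - δ := Real.sq_sqrt (by linarith)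
      have hd0 : 0 < 1 + k * t := by positivity
      have hle2 : δ * (1 - k ^ 2) ≤ α * δ * (1 + k * t) ^ 2 := by
        have h' := hle
        simp only [Dcomp] at h'
        rw [← ht, div_le_iff₀ (by positivity : (0:ℝ) < (1 + k * t) ^ 2)] at h'
        linarith
      have hle3 : 1 - k ^ 2 ≤ α * (1 + k * t) ^ 2 :=
        le_of_mul_le_mul_left (by linarith [hle2]) h
      have hc2t : c ^ 2 ≤ (1 + k * t) ^ 2 := by
        rw [hcsq, div_le_iff₀ hα0]; linarith [hle3]
      have hct : c ≤ 1 + k * t :=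
        (pow_le_pow_iff_left₀ hc0 hd0.le two_ne_zero).mp hc2t
      have hst : s ≤ t := by rw [hs, div_le_iff₀ hk0]; linarith [hct]
      have hδδs : δ ≤ δs := by
        have h2 : s ^ 2 ≤ t ^ 2 := pow_le_pow_left₀ hs0 hst 2
        rw [hδs]; linarith [htsq]
      calc Dcomp δ k ≤ α * δ := hle
        _ ≤ α * δs := mul_le_mul_of_nonneg_left hδδs hα0.le
  have hmem : α * δs ∈ {x : ℝ | ∃ δ ∈ Set.Icc (0:ℝ) 1,
      x = Dcomp δ k ∧ Dcomp δ k ≤ α * δ} :=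
    ⟨δs, ⟨hδs0, hδs1⟩, hDδs.symm, le_of_eq hDδs⟩
  have hsup : sSup {x : ℝ | ∃ δ ∈ Set.Icc (0:ℝ) 1,
      x = Dcomp δ k ∧ Dcomp δ k ≤ α * δ} = α * δs :=
    IsGreatest.csSup_eq ⟨hmem, hub⟩
  rw [hsup]
  -- final algebra
  set a := Real.sqrt α with ha
  set b := Real.sqrt K with hb
  have hasq : a ^ 2 = α := Real.sq_sqrt hα0.le
  have hbsq : b ^ 2 = K := Real.sq_sqrt hK0.le
  have ha0 : 0 < a := Real.sqrt_pos.mpr hα0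
  have hb0 : 0 ≤ b := Real.sqrt_nonneg _
  have hb1 : 1 < b := by
    rw [hb, ← Real.sqrt_one]
    exact Real.sqrt_lt_sqrt zero_le_one hK
  have hac : a * c = 2 * b / (K + 1) := by
    have h1 : (a * c) ^ 2 = (2 * b / (K + 1)) ^ 2 := by
      have e2 : (2 * b / (K + 1)) ^ 2 = 4 * K / (K + 1) ^ 2 := by
        rw [div_pow, mul_pow, hbsq]; norm_num
      rw [e2, show (a * c) ^ 2 = a ^ 2 * c ^ 2 by ring, hasq, hcsq, hkk,
        mul_div_assoc']
      rw [mul_comm, mul_div_assoc, div_self hα0.ne', mul_one]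
    have h2 : 0 ≤ 2 * b / (K + 1) := by positivity
    exact (pow_left_inj₀ (mul_nonneg ha0.le hc0) h2 two_ne_zero).mp h1
  have hcval : c = 2 * b / ((K + 1) * a) := by
    rw [eq_div_iff (by positivity)]
    rw [eq_div_iff (by positivity : (K + 1 : ℝ) ≠ 0)] at hac
    linarith [hac]
  rw [hδs, hs, hcval, hk, show α = a ^ 2 from hasq.symm, show K = b ^ 2 from hbsq.symm]
  have h1b : (1:ℝ) < b ^ 2 := by nlinarith [hb1]
  have hb1' : b ^ 2 - 1 ≠ 0 := ne_of_gt (by linarith)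
  have hbne : b ≠ 0 := by linarith
  have hb2 : (b:ℝ) ^ 2 + 1 ≠ 0 := ne_of_gt (by linarith)
  field_simp
  ring
end

section
/- Let k ∈ (0,1) and Δ* = D(δ, −min(k,√(1−δ))) with D(δ,k) = δ(1−k²)/(1+k√(1−δ))², for δ ∈ [0, 1−k²]. Then (1+k²)·Δ*/(1−k²+k²·Δ*) = (1+k²)·δ/(1+k²−2k√(1−δ)). -/
theorem expansion_composition (k δ : ℝ) (hk : k ∈ Set.Ioo (0:ℝ) 1)
    (hδ : δ ∈ Set.Icc (0:ℝ) (1 - k ^ 2)) :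
    (1 + k ^ 2) * Dcomp δ (-(min k (Real.sqrt (1 - δ)))) /
        (1 - k ^ 2 + k ^ 2 * Dcomp δ (-(min k (Real.sqrt (1 - δ))))) =
      (1 + k ^ 2) * δ / (1 + k ^ 2 - 2 * k * Real.sqrt (1 - δ)) := by
  obtain ⟨hk0, hk1⟩ := hk
  obtain ⟨hδ0, hδ1⟩ := hδ
  set s := Real.sqrt (1 - δ) with hsdef
  have h1δ : 0 ≤ 1 - δ := by nlinarith
  have hs2 : s ^ 2 = 1 - δ := Real.sq_sqrt h1δ
  have hs0 : 0 ≤ s := Real.sqrt_nonneg _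
  have hs1 : s ≤ 1 := by
    rw [hsdef]; exact Real.sqrt_le_one.mpr (by nlinarith)
  have hks : k ≤ s := by
    rw [hsdef]
    exact (Real.le_sqrt hk0.le (by nlinarith)).mpr (by nlinarith)
  have hmin : min k s = k := min_eq_left hks
  have hks1 : 0 < 1 - k * s := by nlinarith
  have h2 : 0 < 1 + k ^ 2 - 2 * k * s := by
    nlinarith [sq_nonneg (1 - k * s), mul_nonneg (sq_nonneg k) hδ0]
  rw [hmin]
  unfold Dcomp
  rw [← hsdef]
  have hδs : δ = 1 - s ^ 2 := by linarith
  clear_value s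
  subst hδs
  have h3 : (1 + -k * s) ≠ 0 := by nlinarith
  have h3sq : (1 + -k * s) ^ 2 ≠ 0 := pow_ne_zero _ h3
  have hB : 0 < 1 - k ^ 2 + k ^ 2 * ((1 - s ^ 2) * (1 - (-k) ^ 2) / (1 + -k * s) ^ 2) := by
    have hn : 0 ≤ k ^ 2 * ((1 - s ^ 2) * (1 - (-k) ^ 2) / (1 + -k * s) ^ 2) := by
      apply mul_nonneg (sq_nonneg k)
      apply div_nonneg (mul_nonneg (by nlinarith) (by nlinarith)) (sq_nonneg _)
    nlinarith
  rw [div_eq_div_iff hB.ne' h2.ne']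
  rw [neg_sq]
  have hq : 1 - k * s * 2 + k ^ 2 * s ^ 2 ≠ 0 := by nlinarith [sq_nonneg (1 - k * s)]
  have hq' : (1 + -k * s) ^ 2 = 1 - k * s * 2 + k ^ 2 * s ^ 2 := by ring
  rw [hq']
  field_simp
  ring
end
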